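/- Let (μ_n) be a sequence of (possibly degenerate) Gaussian probability measures on ℝ, i.e., each μ_n is the Gaussian measure with some mean m_n ∈ ℝ and variance v_n ≥ 0 (a Dirac mass when v_n = 0). If μ_n converges weakly to a probability measure μ on ℝ, then μ is a (possibly degenerate) Gaussian measure: there exist m ∈ ℝ and v ≥ 0 such that μ is the Gaussian measure with mean m and variance v. -/

import Mathlib

open MeasureTheory ProbabilityTheory Filter
open scoped NNReal ENNReal Topology

lemma gauss_repr (m : ℝ) (v : ℝ≥0) :
    gaussianReal m v = (gaussianReal 0 1).map (fun x => m + Real.sqrt v * x) := by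
  have h1 : (gaussianReal 0 1).map (fun x => Real.sqrt v * x) = gaussianReal 0 v := by
    rw [show (fun x => Real.sqrt v * x) = (Real.sqrt v * ·) from rfl,
      gaussianReal_map_const_mul]
    congr 1
    · ring
    · ext
      simp [Real.sq_sqrt v.coe_nonneg]
  have h2 : (gaussianReal 0 v).map (· + m) = gaussianReal m v := by
    rw [gaussianReal_map_add_const]; simp
  rw [← h2, ← h1, Measure.map_map (by fun_prop) (by fun_prop)]
  congr 1
  ext x
  simp [Function.comp, add_comm]

lemma gauss_integral_bcf (g : BoundedContinuousFunction ℝ ℝ) (m : ℝ) (v : ℝ≥0) :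
    ∫ x, g x ∂gaussianReal m v = ∫ x, g (m + Real.sqrt v * x) ∂gaussianReal 0 1 := by
  rw [gauss_repr, integral_map (by fun_prop) g.continuous.aestronglyMeasurable]

lemma gauss_param_cont (g : BoundedContinuousFunction ℝ ℝ) {mk : ℕ → ℝ} {vk : ℕ → ℝ≥0}
    {m₀ : ℝ} {v₀ : ℝ≥0} (hm : Tendsto mk atTop (𝓝 m₀))
    (hv : Tendsto (fun k => (vk k : ℝ)) atTop (𝓝 (v₀ : ℝ))) :
    Tendsto (fun k => ∫ x, g x ∂gaussianReal (mk k) (vk k)) atTop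
      (𝓝 (∫ x, g x ∂gaussianReal m₀ v₀)) := by
  simp_rw [gauss_integral_bcf]
  apply tendsto_integral_of_dominated_convergence (fun _ => ‖g‖)
  · exact fun k => (g.continuous.comp (by fun_prop)).aestronglyMeasurable
  · exact integrable_const _
  · exact fun k => Eventually.of_forall fun x => g.norm_coe_le_norm _
  · refine Eventually.of_forall fun x => ?_
    exact (g.continuous.tendsto _).comp
      (hm.add ((((Real.continuous_sqrt.tendsto _).comp hv).mul_const x)))

lemma meas_bound (m a b c : ℝ) {v : ℝ≥0} (hv : v ≠ 0)
    (hc : ∀ x ∈ Set.Ioo a b, gaussianPDFReal m v x ≤ c) :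
    gaussianReal m v (Set.Ioo a b) ≤ ENNReal.ofReal c * ENNReal.ofReal (b - a) := by
  rw [gaussianReal_apply _ hv]
  calc ∫⁻ x in Set.Ioo a b, gaussianPDF m v x
      ≤ ∫⁻ _ in Set.Ioo a b, ENNReal.ofReal c := by
        refine setLIntegral_mono measurable_const (fun x hx => ?_)
        exact ENNReal.ofReal_le_ofReal (hc x hx)
    _ = ENNReal.ofReal c * ENNReal.ofReal (b - a) := by
        rw [setLIntegral_const, Real.volume_Ioo]

lemma pdf_le_one_div (m : ℝ) (v : ℝ≥0) (x : ℝ) :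
    gaussianPDFReal m v x ≤ (Real.sqrt (2 * Real.pi * v))⁻¹ := by
  rw [gaussianPDFReal]
  have h : Real.exp (-(x - m)^2 / (2*v)) ≤ 1 :=
    Real.exp_le_one_iff.2 (div_nonpos_of_nonpos_of_nonneg (neg_nonpos.2 (sq_nonneg _))
      (by positivity))
  calc (Real.sqrt (2*Real.pi*v))⁻¹ * Real.exp (-(x - m)^2 / (2*v))
      ≤ (Real.sqrt (2*Real.pi*v))⁻¹ * 1 := mul_le_mul_of_nonneg_left h (by positivity)
    _ = (Real.sqrt (2*Real.pi*v))⁻¹ := mul_one _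

lemma pdf_le_far (m x d : ℝ) (v : ℝ≥0) (hv : v ≠ 0) (hd : 0 < d) (hx : d ≤ |x - m|) :
    gaussianPDFReal m v x ≤ 2 * Real.sqrt v / d ^ 2 := by
  have hv' : (0:ℝ) < v := by exact_mod_cast pos_iff_ne_zero.2 hv
  have hsv : 0 < Real.sqrt v := Real.sqrt_pos.2 hv'
  rw [gaussianPDFReal]
  have hdd : d^2 ≤ (x - m)^2 := by
    rw [← sq_abs (x - m)]; exact pow_le_pow_left₀ hd.le hx 2
  have h1 : Real.exp (-(x - m)^2 / (2*v)) ≤ Real.exp (-(d^2 / (2*v))) := by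
    apply Real.exp_le_exp.2
    rw [neg_div]
    apply neg_le_neg
    gcongr
  have h2 : Real.exp (-(d^2/(2*v))) ≤ 2*v/d^2 := by
    rw [Real.exp_neg, inv_le_comm₀ (Real.exp_pos _) (by positivity), inv_div]
    exact (Real.add_one_le_exp _).trans' (by nlinarith [sq_nonneg d])
  have hB : (Real.sqrt (2*Real.pi*v))⁻¹ ≤ (Real.sqrt v)⁻¹ := by
    apply inv_anti₀ hsv
    exact Real.sqrt_le_sqrt (by nlinarith [Real.pi_gt_three])
  have key : (Real.sqrt v)⁻¹ * (v:ℝ) = Real.sqrt v := by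
    nth_rewrite 1 [← Real.mul_self_sqrt v.coe_nonneg]
    field_simp
    rw [Real.sqrt_sq hsv.le, Real.mul_self_sqrt v.coe_nonneg]
  calc (Real.sqrt (2*Real.pi*v))⁻¹ * Real.exp (-(x-m)^2/(2*v))
      ≤ (Real.sqrt v)⁻¹ * (2*v/d^2) :=
        mul_le_mul hB (h1.trans h2) (Real.exp_pos _).le (by positivity)
    _ = 2 * ((Real.sqrt v)⁻¹ * v) / d^2 := by ring
    _ = 2 * Real.sqrt v / d^2 := by rw [key]

/-- A weak limit of (possibly degenerate) Gaussian probability measures on `ℝ`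
is a (possibly degenerate) Gaussian measure. -/
theorem stmt9 (m : ℕ → ℝ) (v : ℕ → ℝ≥0) (μ : Measure ℝ) [IsProbabilityMeasure μ]
    (hconv : ∀ g : BoundedContinuousFunction ℝ ℝ,
      Tendsto (fun n => ∫ x, g x ∂gaussianReal (m n) (v n)) atTop (𝓝 (∫ x, g x ∂μ))) :
    ∃ (m₀ : ℝ) (v₀ : ℝ≥0), μ = gaussianReal m₀ v₀ := by
  classical
  -- package as ProbabilityMeasure and get weak convergence
  let μP : ProbabilityMeasure ℝ := ⟨μ, inferInstance⟩
  let μs : ℕ → ProbabilityMeasure ℝ := fun n => ⟨gaussianReal (m n) (v n), inferInstance⟩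
  have htend : Tendsto μs atTop (𝓝 μP) := by
    rw [ProbabilityMeasure.tendsto_iff_forall_integral_tendsto]
    exact hconv
  -- find R ≥ 1 with μ (Ioo (-R) R) > 1/2
  have hunion : ⋃ n : ℕ, Set.Ioo (-(n:ℝ)) n = Set.univ := by
    ext x
    simp only [Set.mem_iUnion, Set.mem_Ioo, Set.mem_univ, iff_true]
    obtain ⟨n, hn⟩ := exists_nat_gt |x|
    exact ⟨n, neg_lt_of_abs_lt hn, lt_of_abs_lt hn⟩
  have hmono : Monotone (fun n : ℕ => Set.Ioo (-(n:ℝ)) n) := fun a b hab =>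
    Set.Ioo_subset_Ioo (neg_le_neg (Nat.cast_le.2 hab)) (Nat.cast_le.2 hab)
  have htendM : Tendsto (fun n : ℕ => μ (Set.Ioo (-(n:ℝ)) n)) atTop (𝓝 (μ Set.univ)) := by
    rw [← hunion]
    exact tendsto_measure_iUnion_atTop hmono
  rw [measure_univ] at htendM
  have hhalf : (1:ℝ≥0∞)/2 < 1 := by norm_num
  obtain ⟨n₀, hn₀, hn₀1⟩ :=
    ((htendM.eventually (eventually_gt_nhds hhalf)).and (eventually_ge_atTop 1)).exists
  set R : ℝ := (n₀ : ℝ) with hRdef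
  have hR1 : (1:ℝ) ≤ R := by rw [hRdef]; exact_mod_cast hn₀1
  have hR0 : (0:ℝ) < R := lt_of_lt_of_le one_pos hR1
  -- portmanteau: eventually μₙ (Ioo (-R) R) > 1/2
  have hlim : (μ : Measure ℝ) (Set.Ioo (-R) R)
      ≤ atTop.liminf (fun n => (μs n : Measure ℝ) (Set.Ioo (-R) R)) :=
    ProbabilityMeasure.le_liminf_measure_open_of_tendsto htend isOpen_Ioo
  have hev : ∀ᶠ n in atTop,
      (1:ℝ≥0∞)/2 < gaussianReal (m n) (v n) (Set.Ioo (-R) R) := by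
    have := eventually_lt_of_lt_liminf (lt_of_lt_of_le hn₀ hlim)
    exact this
  -- threshold constants
  set V : ℝ := 16 * R^2 with hVdef
  have hV0 : (0:ℝ) < V := by positivity
  set d : ℝ := 8 * (R+1) * (Real.sqrt V + 1) with hddef
  have hd0 : (0:ℝ) < d := by positivity
  set M : ℝ := R + d with hMdef
  have half_eq : ENNReal.ofReal ((1:ℝ)/2) = (1:ℝ≥0∞)/2 := by
    rw [ENNReal.ofReal_div_of_pos (by norm_num)]
    norm_num
  -- Claim A : if measure of Ioo is > 1/2 then v n ≤ V
  have claimA : ∀ n, (1:ℝ≥0∞)/2 < gaussianReal (m n) (v n) (Set.Ioo (-R) R) →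
      (v n : ℝ) ≤ V := by
    intro n hn
    by_contra hcon
    push_neg at hcon
    have hvne : v n ≠ 0 := by
      intro h
      rw [h] at hcon
      simp only [NNReal.coe_zero] at hcon
      linarith
    have hbound := meas_bound (m n) (-R) R _ hvne (fun x _ => pdf_le_one_div (m n) (v n) x)
    have hreal : (Real.sqrt (2 * Real.pi * (v n)))⁻¹ * (R - (-R)) ≤ 1/2 := by
      have hsq : (4*R) ≤ Real.sqrt (2 * Real.pi * (v n)) := by
        rw [show (4*R : ℝ) = Real.sqrt ((4*R)^2) from (Real.sqrt_sq (by positivity)).symm]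
        apply Real.sqrt_le_sqrt
        nlinarith [Real.pi_gt_three, hcon, hV0]
      have h4R : (0:ℝ) < 4*R := by positivity
      have hinv : (Real.sqrt (2 * Real.pi * (v n)))⁻¹ ≤ (4*R)⁻¹ :=
        inv_anti₀ h4R hsq
      calc (Real.sqrt (2 * Real.pi * (v n)))⁻¹ * (R - (-R))
          ≤ (4*R)⁻¹ * (2*R) := by
            apply mul_le_mul hinv (by linarith) (by linarith) (by positivity)
        _ = 1/2 := by field_simp; ring
    have : gaussianReal (m n) (v n) (Set.Ioo (-R) R) ≤ (1:ℝ≥0∞)/2 := by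
      refine hbound.trans ?_
      rw [← ENNReal.ofReal_mul (by positivity), ← half_eq]
      exact ENNReal.ofReal_le_ofReal hreal
    exact absurd (hn.trans_le this) (lt_irrefl _)
  -- Claim B : if measure of Ioo is > 1/2 and v n ≤ V then |m n| ≤ M
  have claimB : ∀ n, (1:ℝ≥0∞)/2 < gaussianReal (m n) (v n) (Set.Ioo (-R) R) →
      (v n : ℝ) ≤ V → |m n| ≤ M := by
    intro n hn hvV
    by_contra hcon
    push_neg at hcon
    rcases eq_or_ne (v n) 0 with hv0 | hvne
    · rw [hv0, gaussianReal_zero_var, Measure.dirac_apply' _ measurableSet_Ioo] at hn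
      have : m n ∉ Set.Ioo (-R) R := by
        intro hmem
        have habs := abs_lt.2 ⟨hmem.1, hmem.2⟩
        have hRM : R < M := by rw [hMdef]; linarith
        linarith [habs]
      rw [Set.indicator_of_notMem this] at hn
      simp at hn
    · -- far case
      have hfar : ∀ x ∈ Set.Ioo (-R) R, gaussianPDFReal (m n) (v n) x
          ≤ 2 * Real.sqrt (v n) / d^2 := by
        intro x hx
        apply pdf_le_far _ _ _ _ hvne hd0
        have hxR : |x| < R := abs_lt.2 ⟨hx.1, hx.2⟩
        calc d = M - R := by rw [hMdef]; ring
          _ ≤ |m n| - |x| := by linarith [hcon.le]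
          _ ≤ |x - m n| := by
              rw [abs_sub_comm]
              linarith [abs_sub_abs_le_abs_sub (m n) x]
      have hbound := meas_bound (m n) (-R) R _ hvne hfar
      have hsvV : Real.sqrt (v n) ≤ Real.sqrt V := Real.sqrt_le_sqrt hvV
      have hsV0 : (0:ℝ) ≤ Real.sqrt V := Real.sqrt_nonneg _
      have hsv0 : (0:ℝ) ≤ Real.sqrt (v n) := Real.sqrt_nonneg _
      have hreal : 2 * Real.sqrt (v n) / d^2 * (R - (-R)) ≤ 1/2 := by
        rw [div_mul_eq_mul_div, div_le_iff₀ (by positivity)]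
        have hd2 : d^2 = 64 * (R+1)^2 * (Real.sqrt V + 1)^2 := by rw [hddef]; ring
        rw [hd2]
        have hstep : R * Real.sqrt (v n) ≤ (R+1) * (Real.sqrt V + 1) :=
          mul_le_mul (by linarith) (by linarith) hsv0 (by linarith)
        have hone : (1:ℝ) ≤ (R+1) * (Real.sqrt V + 1) := by nlinarith
        nlinarith [hstep, hone, sq_nonneg ((R+1) * (Real.sqrt V + 1) - 1)]
      have : gaussianReal (m n) (v n) (Set.Ioo (-R) R) ≤ (1:ℝ≥0∞)/2 := by
        refine hbound.trans ?_
        rw [← ENNReal.ofReal_mul (by positivity), ← half_eq]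
        exact ENNReal.ofReal_le_ofReal hreal
      exact absurd (hn.trans_le this) (lt_irrefl _)
  -- eventual bounds
  have hevb : ∀ᶠ n in atTop, (v n : ℝ) ≤ V ∧ |m n| ≤ M := by
    filter_upwards [hev] with n hn
    exact ⟨claimA n hn, claimB n hn (claimA n hn)⟩
  obtain ⟨N, hN⟩ := eventually_atTop.1 hevb
  -- Bolzano–Weierstrass on the pair sequence
  set x : ℕ → ℝ × ℝ := fun k => (m (k + N), (v (k + N) : ℝ)) with hxdef
  have hbnd : Bornology.IsBounded ((Set.Icc (-M) M) ×ˢ (Set.Icc (0:ℝ) V)) :=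
    (Metric.isBounded_Icc _ _).prod (Metric.isBounded_Icc _ _)
  have hmem : ∀ k, x k ∈ (Set.Icc (-M) M) ×ˢ (Set.Icc (0:ℝ) V) := by
    intro k
    obtain ⟨h1, h2⟩ := hN (k + N) (Nat.le_add_left _ _)
    exact ⟨abs_le.1 h2, ⟨(v _).coe_nonneg, h1⟩⟩
  obtain ⟨p, hp, φ, hφ, hlimp⟩ := tendsto_subseq_of_bounded hbnd hmem
  have hpmem : p ∈ (Set.Icc (-M) M) ×ˢ (Set.Icc (0:ℝ) V) := by
    have hclosed : IsClosed ((Set.Icc (-M) M) ×ˢ (Set.Icc (0:ℝ) V)) :=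
      isClosed_Icc.prod isClosed_Icc
    exact hclosed.closure_subset hp
  have hv0' : 0 ≤ p.2 := hpmem.2.1
  set v₀ : ℝ≥0 := ⟨p.2, hv0'⟩ with hv₀def
  refine ⟨p.1, v₀, ?_⟩
  -- subsequence index
  set ψ : ℕ → ℕ := fun k => φ k + N with hψdef
  have hψtend : Tendsto ψ atTop atTop :=
    tendsto_atTop_mono (fun k => (hφ.id_le k).trans (Nat.le_add_right _ _)) tendsto_id
  have hm1 : Tendsto (fun k => m (ψ k)) atTop (𝓝 p.1) :=
    (continuous_fst.tendsto _).comp hlimp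
  have hm2 : Tendsto (fun k => (v (ψ k) : ℝ)) atTop (𝓝 (v₀ : ℝ)) :=
    (continuous_snd.tendsto _).comp hlimp
  -- integrals agree
  have key : ∀ g : BoundedContinuousFunction ℝ ℝ,
      ∫ y, g y ∂μ = ∫ y, g y ∂gaussianReal p.1 v₀ := by
    intro g
    exact tendsto_nhds_unique ((hconv g).comp hψtend) (gauss_param_cont g hm1 hm2)
  -- conclude measures are equal
  apply ext_of_forall_lintegral_eq_of_IsFiniteMeasure
  intro f
  have hlip : LipschitzWith 1 ((↑) : ℝ≥0 → ℝ) :=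
    LipschitzWith.of_dist_le_mul fun a b => by
      rw [NNReal.dist_eq, Real.dist_eq, NNReal.coe_one, one_mul]
  set g : BoundedContinuousFunction ℝ ℝ := f.comp _ hlip with hgdef
  have hg : ∀ y, g y = (f y : ℝ) := fun _ => rfl
  rw [← ENNReal.toReal_eq_toReal_iff' (f.lintegral_lt_top_of_nnreal μ).ne
    (f.lintegral_lt_top_of_nnreal _).ne,
    BoundedContinuousFunction.toReal_lintegral_coe_eq_integral,
    BoundedContinuousFunction.toReal_lintegral_coe_eq_integral]
  simpa only [hg] using key g
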